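/- arXiv:1402.0647 — 7 statements merged into one kernel-verified Lean document; each statement's English description precedes it below -/
import Mathlib

section
/- Let (A, m_A) be a commutative local ring and let α, β ∈ m_A be elements of its maximal ideal. If there exists an isomorphism of A-algebras A[[x,y]]/(xy − α) ≅ A[[s,t]]/(st − β), then the principal ideals αA and βA of A are equal. -/
open MvPowerSeries Finsupp

namespace Stmt1Aux

variable {A : Type*} [CommRing A]

/-- The ideal generated by the ranges of all `A`-derivations of `R`. -/
def dIdeal (A R : Type*) [CommRing A] [CommRing R] [Algebra A R] : Ideal R :=
  Ideal.span (⋃ d : Derivation A R R, Set.range (d : R → R))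

lemma apply_mem_dIdeal {R : Type*} [CommRing R] [Algebra A R]
    (d : Derivation A R R) (r : R) : d r ∈ dIdeal A R :=
  Ideal.subset_span (Set.mem_iUnion.2 ⟨d, ⟨r, rfl⟩⟩)

/-- Transport a derivation along an algebra equivalence. -/
def transDer {R R' : Type*} [CommRing R] [CommRing R'] [Algebra A R] [Algebra A R']
    (e : R ≃ₐ[A] R') (d : Derivation A R R) : Derivation A R' R' :=
  Derivation.mk' (e.toLinearMap ∘ₗ d.toLinearMap ∘ₗ e.symm.toLinearMap) (by
    intro a b
    simp only [LinearMap.coe_comp, Function.comp_apply, AlgEquiv.toLinearMap_apply,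
      smul_eq_mul, map_mul, Derivation.leibniz]
    simp [smul_eq_mul, map_mul, map_add])

lemma transDer_apply {R R' : Type*} [CommRing R] [CommRing R'] [Algebra A R] [Algebra A R']
    (e : R ≃ₐ[A] R') (d : Derivation A R R) (r : R') :
    transDer e d r = e (d (e.symm r)) := rfl

lemma map_mem_dIdeal {R R' : Type*} [CommRing R] [CommRing R'] [Algebra A R] [Algebra A R']
    (e : R ≃ₐ[A] R') {x : R} (hx : x ∈ dIdeal A R) : e x ∈ dIdeal A R' := by
  have hle : dIdeal A R ≤ Ideal.comap (e : R →+* R') (dIdeal A R') := by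
    refine Ideal.span_le.2 ?_
    rintro y hy
    obtain ⟨_, ⟨d, rfl⟩, ⟨r, rfl⟩⟩ := hy
    have he : e (d r) = transDer e d (e r) := by
      rw [transDer_apply, AlgEquiv.symm_apply_apply]
    rw [SetLike.mem_coe, Ideal.mem_comap]
    show e (d r) ∈ dIdeal A R'
    rw [he]
    exact apply_mem_dIdeal (transDer e d) (e r)
  exact hle hx

lemma comap_dIdeal {R R' : Type*} [CommRing R] [CommRing R'] [Algebra A R] [Algebra A R']
    (e : R ≃ₐ[A] R') :
    (dIdeal A R).comap (algebraMap A R) = (dIdeal A R').comap (algebraMap A R') := by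
  ext a
  simp only [Ideal.mem_comap]
  constructor
  · intro h
    have := map_mem_dIdeal e h
    rwa [AlgEquiv.commutes] at this
  · intro h
    have := map_mem_dIdeal e.symm h
    rwa [AlgEquiv.commutes] at this

/-! ### The weight derivation on `A[[x,y]]` -/

/-- weight of a monomial -/
def w (m : Fin 2 →₀ ℕ) : ℤ := (m 0 : ℤ) - (m 1 : ℤ)

/-- The derivation `x ∂ₓ - y ∂_y` on `A[[x,y]]`, defined coefficientwise. -/
noncomputable def wd : MvPowerSeries (Fin 2) A →ₗ[A] MvPowerSeries (Fin 2) A where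
  toFun f := fun m => w m • f m
  map_add' f g := by
    funext m
    show w m • (f m + g m) = w m • f m + w m • g m
    rw [smul_add]
  map_smul' a f := by
    funext m
    show w m • (a • f m) = a • (w m • f m)
    rw [smul_comm]

lemma coeff_wd (f : MvPowerSeries (Fin 2) A) (m : Fin 2 →₀ ℕ) :
    coeff m (wd f) = w m • coeff m f := rfl

lemma wd_mul (f g : MvPowerSeries (Fin 2) A) :
    wd (f * g) = wd f * g + f * wd g := by
  ext m
  rw [map_add, coeff_wd, coeff_mul, coeff_mul, coeff_mul, Finset.smul_sum,
    ← Finset.sum_add_distrib]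
  refine Finset.sum_congr rfl ?_
  intro p hp
  have hpm : p.1 + p.2 = m := Finset.HasAntidiagonal.mem_antidiagonal.1 hp
  have hw : w p.1 + w p.2 = w m := by
    subst hpm
    simp only [w, Finsupp.add_apply]
    push_cast
    ring
  rw [coeff_wd, coeff_wd, ← hw, add_smul, smul_mul_assoc, mul_smul_comm]

/-- The weight derivation on `A[[x,y]]`. -/
noncomputable def wDer : Derivation A (MvPowerSeries (Fin 2) A) (MvPowerSeries (Fin 2) A) :=
  Derivation.mk' wd (by
    intro a b
    rw [wd_mul, smul_eq_mul, smul_eq_mul]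
    ring)

/-! ### The quotient ring `A[[x,y]]/(xy - α)` -/

/-- the ideal `(xy - α)` -/
noncomputable abbrev Iq (α : A) : Ideal (MvPowerSeries (Fin 2) A) :=
  Ideal.span {X 0 * X 1 - C (σ := Fin 2) (R := A) α}

lemma X_mul_X : (X 0 * X 1 : MvPowerSeries (Fin 2) A)
    = monomial (single (0 : Fin 2) 1 + single 1 1) 1 := by
  rw [X_def, X_def, monomial_mul_monomial, one_mul]

lemma wd_G (α : A) : wd (X 0 * X 1 - C (σ := Fin 2) (R := A) α) = 0 := by
  ext m
  rw [coeff_wd, map_zero]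
  by_cases h1 : m = single (0 : Fin 2) 1 + single 1 1
  · have hw : w m = 0 := by
      subst h1
      simp [w, Finsupp.add_apply, Finsupp.single_apply]
    rw [hw, zero_smul]
  · by_cases h0 : m = 0
    · have hw : w m = 0 := by subst h0; simp [w]
      rw [hw, zero_smul]
    · rw [map_sub, X_mul_X, coeff_monomial, coeff_C, if_neg h1, if_neg h0, sub_zero, smul_zero]

lemma wd_mem_Iq {α : A} {f : MvPowerSeries (Fin 2) A} (hf : f ∈ Iq α) : wd f ∈ Iq α := by
  obtain ⟨c, rfl⟩ := Ideal.mem_span_singleton'.1 hf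
  rw [wd_mul, wd_G, mul_zero, add_zero]
  exact Ideal.mem_span_singleton'.2 ⟨wd c, rfl⟩

noncomputable def sec (α : A) (r : MvPowerSeries (Fin 2) A ⧸ Iq α) :
    MvPowerSeries (Fin 2) A :=
  Function.surjInv Ideal.Quotient.mk_surjective r

lemma mk_sec (α : A) (r : MvPowerSeries (Fin 2) A ⧸ Iq α) :
    Ideal.Quotient.mk (Iq α) (sec α r) = r :=
  Function.surjInv_eq _ r

noncomputable def DbarFun (α : A) (r : MvPowerSeries (Fin 2) A ⧸ Iq α) :
    MvPowerSeries (Fin 2) A ⧸ Iq α :=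
  Ideal.Quotient.mk (Iq α) (wd (sec α r))

lemma DbarFun_mk (α : A) (f : MvPowerSeries (Fin 2) A) :
    DbarFun α (Ideal.Quotient.mk (Iq α) f) = Ideal.Quotient.mk (Iq α) (wd f) := by
  have h1 : sec α (Ideal.Quotient.mk (Iq α) f) - f ∈ Iq α :=
    Ideal.Quotient.eq.1 (mk_sec α _)
  have h2 := wd_mem_Iq h1
  rw [map_sub] at h2
  exact Ideal.Quotient.eq.2 h2

lemma mk_smul (α : A) (a : A) (f : MvPowerSeries (Fin 2) A) :
    Ideal.Quotient.mk (Iq α) (a • f) = a • Ideal.Quotient.mk (Iq α) f := by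
  rw [Algebra.smul_def, map_mul, Ideal.Quotient.mk_algebraMap, ← Algebra.smul_def]

/-- The weight derivation descends to the quotient. -/
noncomputable def Dbar (α : A) :
    Derivation A (MvPowerSeries (Fin 2) A ⧸ Iq α) (MvPowerSeries (Fin 2) A ⧸ Iq α) :=
  Derivation.mk'
    { toFun := DbarFun α
      map_add' := by
        intro r s
        obtain ⟨f, rfl⟩ := Ideal.Quotient.mk_surjective r
        obtain ⟨g, rfl⟩ := Ideal.Quotient.mk_surjective s
        rw [← map_add, DbarFun_mk, DbarFun_mk, DbarFun_mk, map_add, map_add]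
      map_smul' := by
        intro a r
        obtain ⟨f, rfl⟩ := Ideal.Quotient.mk_surjective r
        simp only [RingHom.id_apply]
        show DbarFun α (a • Ideal.Quotient.mk (Iq α) f) = a • DbarFun α (Ideal.Quotient.mk (Iq α) f)
        rw [← mk_smul, DbarFun_mk, DbarFun_mk, map_smul, mk_smul] }
    (by
      intro a b
      obtain ⟨f, rfl⟩ := Ideal.Quotient.mk_surjective a
      obtain ⟨g, rfl⟩ := Ideal.Quotient.mk_surjective b
      show DbarFun α _ = _ • DbarFun α _ + _ • DbarFun α _
      rw [← map_mul, DbarFun_mk, DbarFun_mk, DbarFun_mk, wd_mul, map_add, map_mul, map_mul,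
        smul_eq_mul, smul_eq_mul]
      ring)

lemma Dbar_mk (α : A) (f : MvPowerSeries (Fin 2) A) :
    Dbar α (Ideal.Quotient.mk (Iq α) f) = Ideal.Quotient.mk (Iq α) (wd f) :=
  DbarFun_mk α f

lemma wd_X0 : wd (X 0 : MvPowerSeries (Fin 2) A) = X 0 := by
  ext m
  rw [coeff_wd, coeff_X]
  by_cases h : m = single (0 : Fin 2) 1
  · subst h
    rw [if_pos rfl]
    have hw : w (single (0 : Fin 2) 1) = 1 := by
      simp [w, Finsupp.single_apply]
    rw [hw, one_smul]
  · rw [if_neg h, smul_zero]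

lemma mkX0_mem_dIdeal (α : A) :
    Ideal.Quotient.mk (Iq α) (X 0) ∈ dIdeal A (MvPowerSeries (Fin 2) A ⧸ Iq α) := by
  have h : Dbar α (Ideal.Quotient.mk (Iq α) (X 0)) = Ideal.Quotient.mk (Iq α) (X 0) := by
    rw [Dbar_mk, wd_X0]
  rw [← h]
  exact apply_mem_dIdeal _ _

lemma mk_C_eq (α : A) (a : A) :
    Ideal.Quotient.mk (Iq α) (C (σ := Fin 2) (R := A) a)
      = algebraMap A (MvPowerSeries (Fin 2) A ⧸ Iq α) a := by
  rw [c_eq_algebraMap, Ideal.Quotient.mk_algebraMap]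

lemma mk_X0_mul_X1 (α : A) :
    Ideal.Quotient.mk (Iq α) (X 0) * Ideal.Quotient.mk (Iq α) (X 1)
      = algebraMap A (MvPowerSeries (Fin 2) A ⧸ Iq α) α := by
  rw [← map_mul, ← mk_C_eq]
  exact Ideal.Quotient.eq.2 (Ideal.subset_span (Set.mem_singleton _))

lemma algMap_mem_dIdeal (α : A) :
    algebraMap A (MvPowerSeries (Fin 2) A ⧸ Iq α) α
      ∈ dIdeal A (MvPowerSeries (Fin 2) A ⧸ Iq α) := by
  rw [← mk_X0_mul_X1]
  exact Ideal.mul_mem_right _ _ (mkX0_mem_dIdeal α)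

/-! ### Decomposition `f = C f₀ + x g + y h` -/

lemma not_le_single_01 : ¬ (single (0 : Fin 2) 1 + single 1 1 ≤ single (0 : Fin 2) 1) := by
  intro hle
  have := Finsupp.le_def.1 hle 1
  simp [Finsupp.single_apply, Finsupp.add_apply] at this

lemma not_le_single_10 : ¬ (single (0 : Fin 2) 1 + single 1 1 ≤ single (1 : Fin 2) 1) := by
  intro hle
  have := Finsupp.le_def.1 hle 0
  simp [Finsupp.single_apply, Finsupp.add_apply] at this

lemma not_le_e1_e0 : ¬ (single (1 : Fin 2) 1 ≤ single (0 : Fin 2) 1) := by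
  intro hle
  have := Finsupp.le_def.1 hle 1
  simp [Finsupp.single_apply] at this

lemma not_le_e0_e1 : ¬ (single (0 : Fin 2) 1 ≤ single (1 : Fin 2) 1) := by
  intro hle
  have := Finsupp.le_def.1 hle 0
  simp [Finsupp.single_apply] at this

/-- the part of `f` divisible by `x`, divided by `x` (greedy) -/
noncomputable def tail0 (f : MvPowerSeries (Fin 2) A) : MvPowerSeries (Fin 2) A :=
  fun m => coeff (m + single 0 1) f

/-- the part of `f` with no `x` and at least one `y`, divided by `y` -/
noncomputable def tail1 (f : MvPowerSeries (Fin 2) A) : MvPowerSeries (Fin 2) A :=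
  fun m => if m 0 = 0 then coeff (m + single 1 1) f else 0

lemma coeff_tail0 (f : MvPowerSeries (Fin 2) A) (m : Fin 2 →₀ ℕ) :
    coeff m (tail0 f) = coeff (m + single 0 1) f := rfl

lemma coeff_tail1 (f : MvPowerSeries (Fin 2) A) (m : Fin 2 →₀ ℕ) :
    coeff m (tail1 f) = if m 0 = 0 then coeff (m + single 1 1) f else 0 := rfl

lemma decomp (f : MvPowerSeries (Fin 2) A) :
    f = C (σ := Fin 2) (R := A) (coeff 0 f) + X 0 * tail0 f + X 1 * tail1 f := by
  ext n
  rw [map_add, map_add, coeff_C, X_def, X_def, coeff_monomial_mul, coeff_monomial_mul,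
    coeff_tail0, coeff_tail1, one_mul, one_mul]
  by_cases hn0 : n 0 = 0
  · by_cases hn1 : n 1 = 0
    · have hn : n = 0 := by
        ext i
        fin_cases i
        · simpa using hn0
        · simpa using hn1
      subst hn
      have h0 : ¬ (single (0 : Fin 2) 1 ≤ (0 : Fin 2 →₀ ℕ)) := by
        simp [Finsupp.single_le_iff]
      have h1 : ¬ (single (1 : Fin 2) 1 ≤ (0 : Fin 2 →₀ ℕ)) := by
        simp [Finsupp.single_le_iff]
      rw [if_pos rfl, if_neg h0, if_neg h1, add_zero, add_zero]
    · have hne : n ≠ 0 := by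
        intro h
        rw [h] at hn1
        simp at hn1
      have h0 : ¬ (single (0 : Fin 2) 1 ≤ n) := by
        rw [Finsupp.single_le_iff, hn0]
        omega
      have h1 : single (1 : Fin 2) 1 ≤ n :=
        Finsupp.single_le_iff.2 (Nat.one_le_iff_ne_zero.2 hn1)
      have hsub0 : (n - single (1 : Fin 2) 1 : Fin 2 →₀ ℕ) 0 = 0 := by
        rw [Finsupp.tsub_apply]
        simp [Finsupp.single_apply, hn0]
      rw [if_neg hne, if_neg h0, if_pos h1, if_pos hsub0, tsub_add_cancel_of_le h1,
        zero_add, zero_add]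
  · have hne : n ≠ 0 := by
      intro h
      rw [h] at hn0
      simp at hn0
    have h0 : single (0 : Fin 2) 1 ≤ n :=
      Finsupp.single_le_iff.2 (Nat.one_le_iff_ne_zero.2 hn0)
    rw [if_neg hne, if_pos h0, tsub_add_cancel_of_le h0]
    by_cases h1 : single (1 : Fin 2) 1 ≤ n
    · have hsub0 : (n - single (1 : Fin 2) 1 : Fin 2 →₀ ℕ) 0 ≠ 0 := by
        rw [Finsupp.tsub_apply]
        simpa [Finsupp.single_apply] using hn0
      rw [if_pos h1, if_neg hsub0, add_zero, zero_add]
    · rw [if_neg h1, add_zero, zero_add]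

/-- the ideal `(x, y)` in the quotient -/
noncomputable def Sq (α : A) : Ideal (MvPowerSeries (Fin 2) A ⧸ Iq α) :=
  Ideal.span {Ideal.Quotient.mk (Iq α) (X 0), Ideal.Quotient.mk (Iq α) (X 1)}

lemma mkX0_mem_Sq (α : A) : Ideal.Quotient.mk (Iq α) (X 0) ∈ Sq α :=
  Ideal.subset_span (Set.mem_insert _ _)

lemma mkX1_mem_Sq (α : A) : Ideal.Quotient.mk (Iq α) (X 1) ∈ Sq α :=
  Ideal.subset_span (Set.mem_insert_of_mem _ rfl)

lemma const_mem_Sq_of {α a : A} (ha : a ∈ Ideal.span {α}) :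
    algebraMap A (MvPowerSeries (Fin 2) A ⧸ Iq α) a ∈ Sq α := by
  obtain ⟨c, rfl⟩ := Ideal.mem_span_singleton'.1 ha
  rw [map_mul, ← mk_X0_mul_X1]
  exact Ideal.mul_mem_left _ _ (Ideal.mul_mem_right _ _ (mkX0_mem_Sq α))

lemma mk_mem_Sq {α : A} {f : MvPowerSeries (Fin 2) A} (hf : coeff 0 f ∈ Ideal.span {α}) :
    Ideal.Quotient.mk (Iq α) f ∈ Sq α := by
  rw [decomp f, map_add, map_add, map_mul, map_mul, mk_C_eq]
  refine add_mem (add_mem (const_mem_Sq_of hf) ?_) ?_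
  · exact Ideal.mul_mem_right _ _ (mkX0_mem_Sq α)
  · exact Ideal.mul_mem_right _ _ (mkX1_mem_Sq α)

lemma const_mem_span_of_mem_Sq {α a : A}
    (ha : algebraMap A (MvPowerSeries (Fin 2) A ⧸ Iq α) a ∈ Sq α) :
    a ∈ Ideal.span {α} := by
  rw [← mk_C_eq] at ha
  obtain ⟨u, v, huv⟩ := Ideal.mem_span_pair.1 ha
  obtain ⟨u', rfl⟩ := Ideal.Quotient.mk_surjective u
  obtain ⟨v', rfl⟩ := Ideal.Quotient.mk_surjective v
  have hmem : C (σ := Fin 2) (R := A) a - (u' * X 0 + v' * X 1) ∈ Iq α := by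
    refine Ideal.Quotient.eq.1 ?_
    rw [← huv, map_add, map_mul, map_mul]
  obtain ⟨c, hc⟩ := Ideal.mem_span_singleton'.1 hmem
  have h0 := congrArg (constantCoeff (σ := Fin 2) (R := A)) hc
  simp only [map_mul, map_sub, map_add, constantCoeff_X, constantCoeff_C, mul_zero, zero_mul,
    add_zero, sub_zero, mul_comm] at h0
  refine Ideal.mem_span_singleton'.2 ⟨-(constantCoeff (σ := Fin 2) (R := A) c), ?_⟩
  linear_combination h0

/-! ### Every derivation lands in `(x, y)` -/

lemma D_mk_X_mem (α : A)
    (D : Derivation A (MvPowerSeries (Fin 2) A ⧸ Iq α) (MvPowerSeries (Fin 2) A ⧸ Iq α)) :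
    D (Ideal.Quotient.mk (Iq α) (X 0)) ∈ Sq α ∧ D (Ideal.Quotient.mk (Iq α) (X 1)) ∈ Sq α := by
  obtain ⟨u', hu⟩ := Ideal.Quotient.mk_surjective (D (Ideal.Quotient.mk (Iq α) (X 0)))
  obtain ⟨v', hv⟩ := Ideal.Quotient.mk_surjective (D (Ideal.Quotient.mk (Iq α) (X 1)))
  have hrel : Ideal.Quotient.mk (Iq α) (X 0) * D (Ideal.Quotient.mk (Iq α) (X 1))
      + Ideal.Quotient.mk (Iq α) (X 1) * D (Ideal.Quotient.mk (Iq α) (X 0)) = 0 := by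
    have h1 := D.leibniz (Ideal.Quotient.mk (Iq α) (X 0)) (Ideal.Quotient.mk (Iq α) (X 1))
    rw [mk_X0_mul_X1, Derivation.map_algebraMap] at h1
    simpa [smul_eq_mul] using h1.symm
  have hmem : X 0 * v' + X 1 * u' ∈ Iq α := by
    rw [← Ideal.Quotient.eq_zero_iff_mem, map_add, map_mul, map_mul, hv, hu]
    exact hrel
  obtain ⟨c, hc⟩ := Ideal.mem_span_singleton'.1 hmem
  rw [mul_sub, X_mul_X] at hc
  constructor
  · -- look at the coefficient of `y`
    have h0 := congrArg (coeff (single (1 : Fin 2) 1)) hc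
    rw [map_sub, coeff_mul_monomial, if_neg not_le_single_10, map_add, X_def, X_def,
      coeff_monomial_mul, coeff_monomial_mul, if_neg not_le_e0_e1, if_pos (le_refl _),
      one_mul, tsub_self, coeff_mul_C, zero_add, zero_sub] at h0
    have hcoeff : coeff 0 u' ∈ Ideal.span {α} :=
      Ideal.mem_span_singleton'.2 ⟨-(coeff (single (1 : Fin 2) 1) c), by linear_combination h0⟩
    rw [← hu]
    exact mk_mem_Sq hcoeff
  · -- look at the coefficient of `x`
    have h0 := congrArg (coeff (single (0 : Fin 2) 1)) hc
    rw [map_sub, coeff_mul_monomial, if_neg not_le_single_01, map_add, X_def, X_def,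
      coeff_monomial_mul, coeff_monomial_mul, if_pos (le_refl _), if_neg not_le_e1_e0,
      one_mul, tsub_self, coeff_mul_C, add_zero, zero_sub] at h0
    have hcoeff : coeff 0 v' ∈ Ideal.span {α} :=
      Ideal.mem_span_singleton'.2 ⟨-(coeff (single (0 : Fin 2) 1) c), by linear_combination h0⟩
    rw [← hv]
    exact mk_mem_Sq hcoeff

lemma D_apply_mem_Sq (α : A)
    (D : Derivation A (MvPowerSeries (Fin 2) A ⧸ Iq α) (MvPowerSeries (Fin 2) A ⧸ Iq α))
    (r : MvPowerSeries (Fin 2) A ⧸ Iq α) : D r ∈ Sq α := by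
  obtain ⟨f, rfl⟩ := Ideal.Quotient.mk_surjective r
  have hf := congrArg (Ideal.Quotient.mk (Iq α)) (decomp f)
  rw [map_add, map_add, map_mul, map_mul, mk_C_eq] at hf
  rw [hf, map_add, map_add, Derivation.map_algebraMap, D.leibniz, D.leibniz]
  simp only [smul_eq_mul, zero_add]
  refine add_mem (add_mem ?_ ?_) (add_mem ?_ ?_)
  · exact Ideal.mul_mem_right _ _ (mkX0_mem_Sq α)
  · exact Ideal.mul_mem_left _ _ (D_mk_X_mem α D).1
  · exact Ideal.mul_mem_right _ _ (mkX1_mem_Sq α)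
  · exact Ideal.mul_mem_left _ _ (D_mk_X_mem α D).2

lemma dIdeal_le_Sq (α : A) :
    dIdeal A (MvPowerSeries (Fin 2) A ⧸ Iq α) ≤ Sq α := by
  refine Ideal.span_le.2 ?_
  intro x hx
  obtain ⟨_, ⟨D, rfl⟩, ⟨r, rfl⟩⟩ := hx
  exact D_apply_mem_Sq α D r

theorem key (α : A) :
    (dIdeal A (MvPowerSeries (Fin 2) A ⧸ Iq α)).comap
      (algebraMap A (MvPowerSeries (Fin 2) A ⧸ Iq α)) = Ideal.span {α} := by
  apply le_antisymm
  · intro a ha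
    exact const_mem_span_of_mem_Sq (dIdeal_le_Sq α (Ideal.mem_comap.1 ha))
  · refine Ideal.span_le.2 ?_
    intro x hx
    rw [Set.mem_singleton_iff] at hx
    subst hx
    exact Ideal.mem_comap.2 (algMap_mem_dIdeal x)

end Stmt1Aux

/-- Let `(A, m_A)` be a commutative local ring and `α, β ∈ m_A`.  If there is an
isomorphism of `A`-algebras `A[[x,y]]/(xy - α) ≅ A[[s,t]]/(st - β)`, then the
principal ideals `αA` and `βA` are equal. -/
theorem stmt1 (A : Type*) [CommRing A] [IsLocalRing A] (α β : A)
    (hα : α ∈ IsLocalRing.maximalIdeal A) (hβ : β ∈ IsLocalRing.maximalIdeal A)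
    (h : Nonempty
      ((MvPowerSeries (Fin 2) A ⧸
          Ideal.span {MvPowerSeries.X 0 * MvPowerSeries.X 1 - MvPowerSeries.C (σ := Fin 2) (R := A) α}) ≃ₐ[A]
       (MvPowerSeries (Fin 2) A ⧸
          Ideal.span {MvPowerSeries.X 0 * MvPowerSeries.X 1 - MvPowerSeries.C (σ := Fin 2) (R := A) β}))) :
    Ideal.span {α} = Ideal.span {β} := by
  obtain ⟨e⟩ := h
  have k := Stmt1Aux.comap_dIdeal e
  rw [← Stmt1Aux.key α, ← Stmt1Aux.key β]
  exact k
end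

section
/- Let R be a commutative local ring, let φ : R → R' be a flat local homomorphism to a commutative local ring R' (so φ is faithfully flat and maps the maximal ideal of R into that of R'), and let I = (d_1, …, d_n) be a finitely generated ideal of R. If the extended ideal I·R' is a principal ideal of R', then I is a principal ideal of R. -/
open TensorProduct

/-- Faithfully flat descent of ideal membership. -/
theorem mem_of_mem_map_of_faithfullyFlat {R R' : Type*} [CommRing R] [CommRing R']
    [Algebra R R'] [Module.FaithfullyFlat R R'] (J : Ideal R) (x : R)
    (hx : algebraMap R R' x ∈ J.map (algebraMap R R')) : x ∈ J := by
  set N := R ⧸ J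
  set m : N := Submodule.Quotient.mk x with hm
  let f : R →ₗ[R] N := LinearMap.toSpanSingleton R N m
  have hf : LinearMap.lTensor R' f = 0 := by
    apply TensorProduct.ext'
    intro r' r
    have h1 : (LinearMap.lTensor R' f) (r' ⊗ₜ r) = r' ⊗ₜ[R] ((Ideal.Quotient.mk J) (r * x)) := by
      simp only [LinearMap.lTensor_tmul, f, LinearMap.toSpanSingleton_apply, hm]
      have h2 : (Ideal.Quotient.mk J) (r * x) = r • (Submodule.Quotient.mk x : R ⧸ J) := by
        rw [← Submodule.Quotient.mk_smul]; rfl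
      rw [h2, TensorProduct.tmul_smul]
    rw [h1, LinearMap.zero_apply]
    apply (TensorProduct.tensorQuotEquivQuotSMul R' J).injective
    rw [TensorProduct.tensorQuotEquivQuotSMul_tmul_mk, map_zero,
      Submodule.Quotient.mk_eq_zero, Ideal.smul_top_eq_map]
    show (r * x) • r' ∈ J.map (algebraMap R R')
    rw [Algebra.smul_def, map_mul]
    exact Ideal.mul_mem_right _ _ (Ideal.mul_mem_left _ _ hx)
  have hf0 : f = 0 := (Module.FaithfullyFlat.zero_iff_lTensor_zero R R' f).2 hf
  have : m = 0 := by
    have := LinearMap.congr_fun hf0 1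
    simpa [f] using this
  rwa [hm, Submodule.Quotient.mk_eq_zero] at this

/-- Let `R` be a local ring, `φ : R → R'` a flat local homomorphism of local rings,
and `I = (d_1, …, d_n)` a finitely generated ideal of `R`.  If the extended ideal
`I·R'` is principal, then `I` is principal. -/
theorem stmt2 (R R' : Type*) [CommRing R] [CommRing R'] [IsLocalRing R] [IsLocalRing R']
    (φ : R →+* R') (hflat : φ.Flat)
    (hlocal : ∀ x ∈ IsLocalRing.maximalIdeal R, φ x ∈ IsLocalRing.maximalIdeal R')
    (n : ℕ) (d : Fin n → R) (I : Ideal R) (hI : I = Ideal.span (Set.range d))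
    (hprin : (I.map φ).IsPrincipal) :
    I.IsPrincipal := by
  letI : Algebra R R' := φ.toAlgebra
  have halg : algebraMap R R' = φ := rfl
  haveI flat : Module.Flat R R' := hflat
  haveI : Module.FaithfullyFlat R R' := by
    rw [Module.FaithfullyFlat.iff_flat_and_ideal_smul_eq_top]
    refine ⟨flat, fun J hJ => ?_⟩
    by_contra hJt
    have hle : J ≤ IsLocalRing.maximalIdeal R := IsLocalRing.le_maximalIdeal hJt
    have h1 : (1 : R') ∈ J • (⊤ : Submodule R R') := by rw [hJ]; trivial
    rw [Ideal.smul_top_eq_map] at h1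
    have h2 : (1 : R') ∈ (IsLocalRing.maximalIdeal R') := by
      have : J.map (algebraMap R R') ≤ IsLocalRing.maximalIdeal R' := by
        rw [Ideal.map_le_iff_le_comap]
        exact fun y hy => hlocal y (hle hy)
      exact this h1
    exact (IsLocalRing.maximalIdeal R').ne_top_iff_one.mp
      (Ideal.IsMaximal.ne_top inferInstance) h2
  -- key: suffices to find e ∈ I with I.map φ = (span {e}).map φ
  suffices h : ∃ e : R, e ∈ I ∧ I.map φ = (Ideal.span {e}).map φ by
    obtain ⟨e, heI, hemap⟩ := h
    refine ⟨e, le_antisymm ?_ ?_⟩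
    · intro y hy
      apply mem_of_mem_map_of_faithfullyFlat (R' := R') (Ideal.span {e}) y
      rw [halg, ← hemap]
      exact Ideal.mem_map_of_mem φ hy
    · rw [Submodule.span_le, Set.singleton_subset_iff]; exact heI
  obtain ⟨x, hx⟩ := hprin
  -- x = Σ c i * φ (d i)
  have hxmem : x ∈ I.map φ := hx ▸ Ideal.subset_span rfl
  have hspan : I.map φ = Ideal.span (Set.range (φ ∘ d)) := by
    rw [hI, Ideal.map_span, ← Set.range_comp]
  obtain ⟨c, hc⟩ : ∃ c : Fin n → R', (∑ i, c i • (φ ∘ d) i) = x := by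
    rw [hspan] at hxmem
    exact (Finsupp.mem_span_range_iff_exists_finsupp.mp hxmem).imp
      (fun c hc => by classical simpa [Finsupp.sum_fintype] using hc) |>.elim
      (fun c hc => ⟨c, hc⟩)
  -- each φ (d i) = b i * x
  have hb : ∀ i, ∃ b : R', φ (d i) = b * x := by
    intro i
    have : φ (d i) ∈ I.map φ := Ideal.mem_map_of_mem φ (hI ▸ Ideal.subset_span ⟨i, rfl⟩)
    rw [hx, Submodule.mem_span_singleton] at this
    obtain ⟨b, hb⟩ := this
    exact ⟨b, by rw [← hb]; rfl⟩
  choose b hbx using hb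
  by_cases hu : ∃ i, IsUnit (b i)
  · obtain ⟨i, hui⟩ := hu
    refine ⟨d i, hI ▸ Ideal.subset_span ⟨i, rfl⟩, le_antisymm ?_ ?_⟩
    · rw [hx, Ideal.map_span, Set.image_singleton]
      rw [show (Submodule.span R' {x} : Ideal R') = Ideal.span {x} from rfl,
        Ideal.span_le, Set.singleton_subset_iff]
      obtain ⟨u, hu⟩ := hui
      have : x = (↑u⁻¹ : R') * φ (d i) := by
        rw [hbx i, ← hu, ← mul_assoc, Units.inv_mul, one_mul]
      rw [this]
      exact Ideal.mul_mem_left _ _ (Ideal.subset_span rfl)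
    · rw [Ideal.map_span, Set.image_singleton, Ideal.span_le, Set.singleton_subset_iff]
      exact Ideal.mem_map_of_mem φ (hI ▸ Ideal.subset_span ⟨i, rfl⟩)
  · -- all b i non-units, then x = 0
    push_neg at hu
    have hs : (∑ i, c i * b i) ∈ IsLocalRing.maximalIdeal R' := by
      apply Ideal.sum_mem
      intro i _
      exact Ideal.mul_mem_left _ _ (hu i)
    have hxz : x = 0 := by
      have heq : (∑ i, c i * b i) * x = x := by
        calc (∑ i, c i * b i) * x = ∑ i, c i * (b i * x) := by
              rw [Finset.sum_mul]; congr 1; ext i; ring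
          _ = ∑ i, c i • (φ ∘ d) i := by
              congr 1; ext i; rw [← hbx i]; rfl
          _ = x := hc
      have hunit : IsUnit (1 - ∑ i, c i * b i) :=
        IsLocalRing.isUnit_one_sub_self_of_mem_nonunits _ hs
      have : (1 - ∑ i, c i * b i) * x = 0 := by rw [sub_mul, one_mul, heq, sub_self]
      obtain ⟨v, hv⟩ := hunit
      calc x = (↑v⁻¹ : R') * ((1 - ∑ i, c i * b i) * x) := by
            rw [← hv, ← mul_assoc, Units.inv_mul, one_mul]
        _ = 0 := by rw [this, mul_zero]
    refine ⟨0, Ideal.zero_mem I, ?_⟩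
    rw [hx, hxz, Ideal.map_span, Set.image_singleton, map_zero]
end

section
/- Let M be a cyclic additive submonoid of ℕ × ℕ (that is, M is generated by a single element). Then the saturation of M is also a cyclic submonoid of ℕ × ℕ. -/
/-- The saturation of an additive submonoid `M` of `ℕ × ℕ`: all `m` such that
`a • m ∈ M` for some positive integer `a`. -/
def saturationSet (M : AddSubmonoid (ℕ × ℕ)) : Set (ℕ × ℕ) :=
  {m | ∃ a : ℕ, 0 < a ∧ a • m ∈ M}

lemma coprime_ratio (p' q' m1 m2 : ℕ) (hco : Nat.Coprime p' q') (h : m1 * q' = m2 * p') :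
    ∃ k, m1 = k * p' ∧ m2 = k * q' := by
  rcases Nat.eq_zero_or_pos p' with hp | hp
  · subst hp
    have hq : q' = 1 := by simpa [Nat.coprime_zero_left] using hco
    subst hq
    exact ⟨m2, by omega, by omega⟩
  · have hdvd : p' ∣ m1 := by
      refine Nat.Coprime.dvd_of_dvd_mul_right hco ⟨m2, ?_⟩
      rw [h, mul_comm]
    obtain ⟨k, hk⟩ := hdvd
    refine ⟨k, by rw [hk, mul_comm], ?_⟩
    have : p' * (k * q') = p' * m2 := by
      calc p' * (k * q') = (p' * k) * q' := by ring
        _ = m1 * q' := by rw [hk]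
        _ = m2 * p' := h
        _ = p' * m2 := by ring
    have := Nat.eq_of_mul_eq_mul_left hp this
    omega

/-- The saturation of a cyclic additive submonoid of `ℕ × ℕ` is again a cyclic
submonoid of `ℕ × ℕ`. -/
theorem stmt6 (M : AddSubmonoid (ℕ × ℕ)) (hcyc : ∃ g, M = AddSubmonoid.closure {g}) :
    ∃ g : ℕ × ℕ, saturationSet M = ↑(AddSubmonoid.closure {g} : AddSubmonoid (ℕ × ℕ)) := by
  obtain ⟨g, rfl⟩ := hcyc
  obtain ⟨p, q⟩ := g
  by_cases hg : p = 0 ∧ q = 0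
  · refine ⟨0, ?_⟩
    ext m
    simp only [saturationSet, Set.mem_setOf_eq, SetLike.mem_coe,
      AddSubmonoid.mem_closure_singleton, hg.1, hg.2]
    constructor
    · rintro ⟨a, ha, n, hn⟩
      refine ⟨0, ?_⟩
      have h1 : n * 0 = a * m.1 := congrArg Prod.fst hn
      have h2 : n * 0 = a * m.2 := congrArg Prod.snd hn
      have hm1 : m.1 = 0 := by
        have := Nat.mul_eq_zero.mp (by omega : a * m.1 = 0)
        omega
      have hm2 : m.2 = 0 := by
        have := Nat.mul_eq_zero.mp (by omega : a * m.2 = 0)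
        omega
      ext <;> simp [hm1, hm2]
    · rintro ⟨n, hn⟩
      exact ⟨1, one_pos, n, by simp [← hn]⟩
  · set d := Nat.gcd p q with hd
    have hdpos : 0 < d := Nat.pos_of_ne_zero fun h0 =>
      hg ⟨Nat.eq_zero_of_gcd_eq_zero_left h0, Nat.eq_zero_of_gcd_eq_zero_right h0⟩
    have hdp : d ∣ p := Nat.gcd_dvd_left p q
    have hdq : d ∣ q := Nat.gcd_dvd_right p q
    set p' := p / d with hp'
    set q' := q / d with hq'
    have hpd : p = d * p' := (Nat.div_mul_cancel hdp).symm.trans (mul_comm _ _)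
    have hqd : q = d * q' := (Nat.div_mul_cancel hdq).symm.trans (mul_comm _ _)
    have hco : Nat.Coprime p' q' := Nat.coprime_div_gcd_div_gcd hdpos
    refine ⟨(p', q'), ?_⟩
    ext m
    simp only [saturationSet, Set.mem_setOf_eq, SetLike.mem_coe,
      AddSubmonoid.mem_closure_singleton]
    constructor
    · rintro ⟨a, ha, n, hn⟩
      have h1 : n * p = a * m.1 := congrArg Prod.fst hn
      have h2 : n * q = a * m.2 := congrArg Prod.snd hn
      have hcross : m.1 * q' = m.2 * p' := by
        have : a * (d * (m.1 * q')) = a * (d * (m.2 * p')) := by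
          calc a * (d * (m.1 * q')) = (a * m.1) * (d * q') := by ring
            _ = (n * p) * q' * d := by rw [← h1]; ring
            _ = (n * q) * p' * d := by rw [hpd, hqd]; ring
            _ = (a * m.2) * (d * p') := by rw [← h2]; ring
            _ = a * (d * (m.2 * p')) := by ring
        have := Nat.eq_of_mul_eq_mul_left ha this
        exact Nat.eq_of_mul_eq_mul_left hdpos this
      obtain ⟨k, hk1, hk2⟩ := coprime_ratio p' q' m.1 m.2 hco hcross
      exact ⟨k, by ext <;> simp [hk1, hk2, mul_comm]⟩
    · rintro ⟨n, hn⟩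
      refine ⟨d, hdpos, n, ?_⟩
      have h1 : n * p' = m.1 := congrArg Prod.fst hn
      have h2 : n * q' = m.2 := congrArg Prod.snd hn
      ext
      · show n * p = d * m.1
        rw [hpd, ← h1]; ring
      · show n * q = d * m.2
        rw [hqd, ← h2]; ring
end

section
/- Let G be a simple graph and let H_1 and H_2 be subgraphs of G, each of which is 2-vertex-connected, and suppose H_1 and H_2 contain a common edge. Then the union H_1 ∪ H_2 is 2-vertex-connected. -/
/-- A subgraph `H` of a simple graph `G` is 2-vertex-connected if it is connected
(in particular nonempty) and remains connected after deleting any one of its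
vertices (together with all incident edges). -/
def TwoVertexConnected {V : Type*} {G : SimpleGraph V} (H : G.Subgraph) : Prop :=
  H.Connected ∧ ∀ v ∈ H.verts, (H.deleteVerts {v}).Connected

lemma deleteVerts_sup {V : Type*} {G : SimpleGraph V} (H₁ H₂ : G.Subgraph) (s : Set V) :
    (H₁ ⊔ H₂).deleteVerts s = H₁.deleteVerts s ⊔ H₂.deleteVerts s := by
  ext x y
  · simp [Set.union_diff_distrib]
  · simp only [SimpleGraph.Subgraph.deleteVerts_adj, SimpleGraph.Subgraph.sup_adj,
      SimpleGraph.Subgraph.verts_sup, Set.mem_union]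
    constructor
    · rintro ⟨_, hx, _, hy, h | h⟩
      · exact Or.inl ⟨h.fst_mem, hx, h.snd_mem, hy, h⟩
      · exact Or.inr ⟨h.fst_mem, hx, h.snd_mem, hy, h⟩
    · rintro (⟨hx, hxs, hy, hys, h⟩ | ⟨hx, hxs, hy, hys, h⟩) <;> tauto

lemma deleteVerts_not_mem {V : Type*} {G : SimpleGraph V} (H : G.Subgraph) {v : V}
    (hv : v ∉ H.verts) : H.deleteVerts {v} = H := by
  rw [← SimpleGraph.Subgraph.deleteVerts_inter_verts_left_eq]
  have : H.verts ∩ {v} = ∅ := by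
    ext x; simp only [Set.mem_inter_iff, Set.mem_singleton_iff, Set.mem_empty_iff_false,
      iff_false]
    rintro ⟨hx, rfl⟩; exact hv hx
  rw [this, SimpleGraph.Subgraph.deleteVerts_empty]

lemma delConn {V : Type*} {G : SimpleGraph V} {H : G.Subgraph}
    (h : TwoVertexConnected H) (v : V) : (H.deleteVerts {v}).Connected := by
  by_cases hv : v ∈ H.verts
  · exact h.2 v hv
  · rw [deleteVerts_not_mem H hv]; exact h.1

/-- If `H₁` and `H₂` are 2-vertex-connected subgraphs of `G` containing a common
edge, then `H₁ ∪ H₂` is 2-vertex-connected. -/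
theorem stmt8 {V : Type*} {G : SimpleGraph V} (H₁ H₂ : G.Subgraph)
    (h₁ : TwoVertexConnected H₁) (h₂ : TwoVertexConnected H₂)
    (e : Sym2 V) (he₁ : e ∈ H₁.edgeSet) (he₂ : e ∈ H₂.edgeSet) :
    TwoVertexConnected (H₁ ⊔ H₂) := by
  induction e with
  | _ u w =>
  rw [SimpleGraph.Subgraph.mem_edgeSet] at he₁ he₂
  have hne : u ≠ w := he₁.ne
  constructor
  · exact SimpleGraph.Subgraph.connected_sup h₁.1.preconnected h₂.1.preconnected ⟨u, he₁.fst_mem, he₂.fst_mem⟩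
  · intro v hv
    rw [deleteVerts_sup]
    obtain ⟨x, hx1, hx2, hxv⟩ : ∃ x, x ∈ H₁.verts ∧ x ∈ H₂.verts ∧ x ≠ v := by
      by_cases huv : u = v
      · exact ⟨w, he₁.snd_mem, he₂.snd_mem, fun h => hne (h ▸ huv ▸ rfl)⟩
      · exact ⟨u, he₁.fst_mem, he₂.fst_mem, huv⟩
    exact SimpleGraph.Subgraph.connected_sup (delConn h₁ v).preconnected (delConn h₂ v).preconnected
      ⟨x, ⟨hx1, hxv⟩, ⟨hx2, hxv⟩⟩
end

section
/- Let K be a field equipped with a discrete additive valuation v : K → ℤ ∪ {∞} (so v(0) = ∞, v(ab) = v(a) + v(b), and v(a+b) ≥ min(v(a), v(b))). Let n ≥ m > 0 and let f = Σ_{i=m}^{n} f_i T^i ∈ K[T] be a polynomial with zero constant coefficient such that v(f_i) ≥ 0 for all i and v(f_m) = v(f_n) = 0. Let g = Σ_{i ≥ 1} f^i ∈ K[[T]] (this sum converges coefficientwise since f has zero constant coefficient; equivalently g = f·(1−f)^{-1}), and write g = Σ_{j ≥ 1} g_j T^j. Then for every integer N ≥ 1, at least one of g_N, g_{N+1}, …,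 g_{N+n} satisfies v(g_j) = 0. In particular liminf_{j → ∞} v(g_j) = 0. -/
section aux
variable {K : Type*} [Field K] (v : K → WithTop ℤ)

lemma aux_sum_le (hv0 : v 0 = ⊤) (hvadd : ∀ a b : K, min (v a) (v b) ≤ v (a + b))
    {α : Type*} (s : Finset α) (F : α → K) (c : WithTop ℤ)
    (h : ∀ i ∈ s, c ≤ v (F i)) : c ≤ v (∑ i ∈ s, F i) := by
  classical
  induction s using Finset.cons_induction with
  | empty => simp [hv0]
  | cons a s ha ih =>
    rw [Finset.sum_cons]
    exact le_trans (le_min (h a (Finset.mem_cons_self a s))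
      (ih fun i hi => h i (Finset.mem_cons_of_mem hi))) (hvadd _ _)

lemma aux_sum_pos (hv0 : v 0 = ⊤) (hvadd : ∀ a b : K, min (v a) (v b) ≤ v (a + b))
    {α : Type*} (s : Finset α) (F : α → K)
    (h : ∀ i ∈ s, 0 < v (F i)) : 0 < v (∑ i ∈ s, F i) := by
  classical
  induction s using Finset.cons_induction with
  | empty => simp [hv0]
  | cons a s ha ih =>
    rw [Finset.sum_cons]
    exact lt_of_lt_of_le (lt_min (h a (Finset.mem_cons_self a s))
      (ih fun i hi => h i (Finset.mem_cons_of_mem hi))) (hvadd _ _)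

lemma aux_vneg (hvmul : ∀ a b : K, v (a * b) = v a + v b) (hone : v 1 = 0) :
    ∀ a : K, v (-a) = v a := by
  have hneg1 : v (-1 : K) = 0 := by
    have h := hvmul (-1) (-1)
    rw [neg_mul_neg, one_mul, hone] at h
    cases hx : v (-1 : K) with
    | top => rw [hx] at h; simp at h
    | coe z =>
      rw [hx] at h
      have hz : (0 : ℤ) = z + z := by exact_mod_cast h
      have : z = 0 := by omega
      exact_mod_cast this
  intro a
  rw [show -a = -1 * a by ring, hvmul, hneg1, zero_add]

lemma aux_vadd_eq (hvmul : ∀ a b : K, v (a * b) = v a + v b)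
    (hvadd : ∀ a b : K, min (v a) (v b) ≤ v (a + b)) (hone : v 1 = 0)
    {x y : K} (h : v x < v y) : v (x + y) = v x := by
  refine le_antisymm ?_ (le_trans (le_of_eq (min_eq_left h.le).symm) (hvadd x y))
  by_contra hlt
  push_neg at hlt
  have h3 := hvadd (x + y) (-y)
  rw [add_neg_cancel_right, aux_vneg v hvmul hone y] at h3
  exact absurd (lt_of_lt_of_le (lt_min hlt h) h3) (lt_irrefl _)

end aux

/-- Let `K` be a field with a discrete additive valuation `v : K → ℤ ∪ {∞}`.
Let `f = Σ_{i=m}^{n} f_i T^i ∈ K[T]` (with `0 < m ≤ n`) have zero constant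
coefficient, `v(f_i) ≥ 0` for all `i`, and `v(f_m) = v(f_n) = 0`.  Let
`g = Σ_{i ≥ 1} f^i`, with coefficients `g_j = Σ_{i=1}^{j} coeff_j (f^i)`.  Then for
every `N ≥ 1`, at least one of `g_N, …, g_{N+n}` has valuation `0`. -/
theorem stmt12 {K : Type*} [Field K] (v : K → WithTop ℤ)
    (hv0 : v 0 = ⊤)
    (hvmul : ∀ a b : K, v (a * b) = v a + v b)
    (hvadd : ∀ a b : K, min (v a) (v b) ≤ v (a + b))
    (m n : ℕ) (hm : 0 < m) (hmn : m ≤ n)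
    (f : Polynomial K)
    (hlow : ∀ i, i < m → f.coeff i = 0)
    (hhigh : ∀ i, n < i → f.coeff i = 0)
    (hint : ∀ i, 0 ≤ v (f.coeff i))
    (hfm : v (f.coeff m) = 0) (hfn : v (f.coeff n) = 0)
    (g : ℕ → K) (hg : ∀ j, g j = ∑ i ∈ Finset.Icc 1 j, (f ^ i).coeff j) :
    ∀ N : ℕ, 1 ≤ N → ∃ j, N ≤ j ∧ j ≤ N + n ∧ v (g j) = 0 := by
  classical
  -- v 1 = 0
  have hone : v (1 : K) = 0 := by
    have h := hvmul (f.coeff m) 1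
    rw [mul_one, hfm] at h
    cases hx : v (1 : K) with
    | top => rw [hx] at h; simp at h
    | coe z =>
      rw [hx] at h
      have hz : (0 : ℤ) = 0 + z := by exact_mod_cast h
      have : z = 0 := by omega
      exact_mod_cast this
  have hlow0 : f.coeff 0 = 0 := hlow 0 hm
  have hg0 : g 0 = 0 := by rw [hg]; simp
  -- low-order coefficients of powers vanish
  have hpowlow : ∀ i j, j < i * m → (f ^ i).coeff j = 0 := by
    intro i
    induction i with
    | zero => intro j hj; omega
    | succ i ih =>
      intro j hj
      have hsm : (i + 1) * m = i * m + m := by ring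
      rw [pow_succ', Polynomial.coeff_mul]
      apply Finset.sum_eq_zero
      intro p hp
      rw [Finset.HasAntidiagonal.mem_antidiagonal] at hp
      by_cases h1 : p.1 < m
      · rw [hlow p.1 h1, zero_mul]
      · rw [ih p.2 (by push_neg at h1; omega), mul_zero]
  -- coefficients of powers have nonnegative valuation
  have hpownn : ∀ i j, 0 ≤ v ((f ^ i).coeff j) := by
    intro i
    induction i with
    | zero =>
      intro j
      rw [pow_zero, Polynomial.coeff_one]
      by_cases h : j = 0 <;> simp [h, hone, hv0]
    | succ i ih =>
      intro j
      rw [pow_succ', Polynomial.coeff_mul]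
      apply aux_sum_le v hv0 hvadd
      intro p _
      rw [hvmul]
      exact add_nonneg (hint _) (ih _)
  have hgnn : ∀ j, 0 ≤ v (g j) := by
    intro j
    rw [hg]
    exact aux_sum_le v hv0 hvadd _ _ _ fun i _ => hpownn i j
  -- the recurrence g_j = f_j + Σ_{a+b=j} f_a g_b for j ≥ 1
  have hrec : ∀ j, 1 ≤ j →
      g j = f.coeff j + ∑ p ∈ Finset.HasAntidiagonal.antidiagonal j, f.coeff p.1 * g p.2 := by
    intro j hj
    have hsplit : Finset.Icc 1 j = insert 1 (Finset.Icc 2 j) := by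
      ext k; simp only [Finset.mem_Icc, Finset.mem_insert]; omega
    rw [hg, hsplit, Finset.sum_insert (by simp), pow_one]
    congr 1
    have hmap : Finset.Icc 2 j =
        Finset.map ⟨fun k => k + 1, add_left_injective 1⟩ (Finset.Icc 1 (j - 1)) := by
      ext k
      simp only [Finset.mem_Icc, Finset.mem_map, Function.Embedding.coeFn_mk]
      constructor
      · intro hk; exact ⟨k - 1, by omega, by omega⟩
      · rintro ⟨a, ha, rfl⟩; omega
    rw [hmap, Finset.sum_map]
    simp only [Function.Embedding.coeFn_mk]
    have step : ∀ k : ℕ, (f ^ (k + 1)).coeff j =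
        ∑ p ∈ Finset.HasAntidiagonal.antidiagonal j, f.coeff p.1 * (f ^ k).coeff p.2 := by
      intro k; rw [pow_succ', Polynomial.coeff_mul]
    simp_rw [step]
    rw [Finset.sum_comm]
    apply Finset.sum_congr rfl
    intro p hp
    rw [Finset.HasAntidiagonal.mem_antidiagonal] at hp
    rw [← Finset.mul_sum]
    by_cases hp1 : p.1 = 0
    · rw [hp1, hlow0, zero_mul, zero_mul]
    · congr 1
      rw [hg]
      refine (Finset.sum_subset ?_ ?_).symm
      · intro k hk
        rw [Finset.mem_Icc] at hk ⊢
        omega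
      · intro k hk1 hk2
        rw [Finset.mem_Icc] at hk1 hk2
        have hkm := Nat.le_mul_of_pos_right k hm
        exact hpowlow k p.2 (by omega)
  -- g m = f m
  have hgm : g m = f.coeff m := by
    rw [hrec m hm]
    have : (∑ p ∈ Finset.HasAntidiagonal.antidiagonal m, f.coeff p.1 * g p.2) = 0 := by
      apply Finset.sum_eq_zero
      intro p hp
      rw [Finset.HasAntidiagonal.mem_antidiagonal] at hp
      by_cases h2 : p.2 = 0
      · rw [h2, hg0, mul_zero]
      · rw [hlow p.1 (by omega), zero_mul]
    rw [this, add_zero]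
  have hvgm : v (g m) = 0 := by rw [hgm]; exact hfm
  intro N hN
  by_contra hcon
  push_neg at hcon
  rcases le_or_gt N m with hNm | hNm
  · exact hcon m hNm (by omega) hvgm
  · -- r = largest index < N with v (g r) = 0
    set S := (Finset.range N).filter (fun j => v (g j) = 0) with hS
    have hmS : m ∈ S := Finset.mem_filter.mpr ⟨Finset.mem_range.mpr hNm, hvgm⟩
    have hSne : S.Nonempty := ⟨m, hmS⟩
    set r := S.max' hSne with hr
    have hrS : r ∈ S := S.max'_mem hSne
    have hrN : r < N := Finset.mem_range.mp (Finset.mem_filter.mp hrS).1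
    have hvr : v (g r) = 0 := (Finset.mem_filter.mp hrS).2
    have hrm : m ≤ r := S.le_max' m hmS
    have key : v (g (r + n)) = 0 := by
      rw [hrec (r + n) (by omega), hhigh (r + n) (by omega), zero_add]
      have hmem : ((n, r) : ℕ × ℕ) ∈ Finset.HasAntidiagonal.antidiagonal (r + n) := by
        rw [Finset.HasAntidiagonal.mem_antidiagonal]; omega
      rw [← Finset.add_sum_erase _ _ hmem]
      have hx0 : v (f.coeff n * g r) = 0 := by rw [hvmul, hfn, hvr, add_zero]
      have hrest : 0 < v (∑ p ∈ (Finset.HasAntidiagonal.antidiagonal (r + n)).erase (n, r),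
          f.coeff p.1 * g p.2) := by
        apply aux_sum_pos v hv0 hvadd
        intro p hp
        have hpne : p ≠ (n, r) := (Finset.mem_erase.mp hp).1
        have hpad : p.1 + p.2 = r + n :=
          Finset.HasAntidiagonal.mem_antidiagonal.mp (Finset.mem_erase.mp hp).2
        by_cases hcase : m ≤ p.1 ∧ p.1 ≤ n
        · have hp1n : p.1 ≠ n := by
            intro h
            exact hpne (Prod.ext h (by omega))
          have hb : r < p.2 := by omega
          have hbne : v (g p.2) ≠ 0 := by
            rcases lt_or_ge p.2 N with hb2 | hb2
            · intro h0
              have : p.2 ∈ S := Finset.mem_filter.mpr ⟨Finset.mem_range.mpr hb2, h0⟩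
              have := S.le_max' p.2 this
              omega
            · exact hcon p.2 hb2 (by omega)
          have hbpos : 0 < v (g p.2) := lt_of_le_of_ne (hgnn p.2) (Ne.symm hbne)
          rw [hvmul]
          calc (0 : WithTop ℤ) < v (g p.2) := hbpos
            _ ≤ v (f.coeff p.1) + v (g p.2) := le_add_of_nonneg_left (hint p.1)
        · have hf0 : f.coeff p.1 = 0 := by
            rcases Nat.lt_or_ge p.1 m with h | h
            · exact hlow p.1 h
            · exact hhigh p.1 (by omega)
          rw [hf0, zero_mul, hv0]
          exact lt_top_iff_ne_top.mpr (by simp)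
      rw [aux_vadd_eq v hvmul hvadd hone (by rw [hx0]; exact hrest)]
      exact hx0
    rcases lt_or_ge (r + n) N with h | h
    · have : r + n ∈ S := Finset.mem_filter.mpr ⟨Finset.mem_range.mpr h, key⟩
      have := S.le_max' (r + n) this
      omega
    · exact hcon (r + n) h (by omega) key
end

section
/- Let K be a field equipped with a discrete additive valuation v : K → ℤ ∪ {∞} (so v(0) = ∞, v(ab) = v(a) + v(b), and v(a+b) ≥ min(v(a), v(b))). Let f = Σ_{i=0}^{d} f_i T^i ∈ K[T] be a polynomial of degree d with f_0 ≠ 0, satisfying v(f_i) ≥ 0 for all i and v(f_0) = v(f_d) = 0 (i.e., the Newton polygon of f has the single gradient 0). Let w = (w_i)_{i ∈ ℤ} be a doubly infinite sequence in K, not identically zero, satisfying f·w = 0, i.e., Σ_{i=0}^{d} f_i w_{k−i} = 0 for every k ∈ ℤ. Set e = min{ v(w_i) : 0 ≤ i ≤ d−1 }. Then liminf_{i → +∞} v(w_i) = e. -/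
/-- Let `K` be a field with a discrete additive valuation `v : K → ℤ ∪ {∞}`.
Let `f ∈ K[T]` have degree `d`, nonzero constant coefficient, `v(f_i) ≥ 0` for all
`i`, and `v(f_0) = v(f_d) = 0`.  Let `w = (w_i)_{i ∈ ℤ}` be a nonzero doubly
infinite sequence with `f·w = 0` (convolution), and let
`e = min { v(w_i) : 0 ≤ i ≤ d - 1 }`.  Then `liminf_{i → +∞} v(w_i) = e`, i.e.
`v(w_i) ≥ e` for all sufficiently large `i`, and `v(w_i) = e` for infinitely many
large `i`. -/
theorem stmt13 {K : Type*} [Field K] (v : K → WithTop ℤ)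
    (hv0 : v 0 = ⊤)
    (hvmul : ∀ a b : K, v (a * b) = v a + v b)
    (hvadd : ∀ a b : K, min (v a) (v b) ≤ v (a + b))
    (f : Polynomial K) (d : ℕ) (hd : f.natDegree = d) (h0 : f.coeff 0 ≠ 0)
    (hint : ∀ i, 0 ≤ v (f.coeff i))
    (hf0 : v (f.coeff 0) = 0) (hfd : v (f.coeff d) = 0)
    (w : ℤ → K) (hw : w ≠ 0)
    (hconv : ∀ k : ℤ, ∑ i ∈ Finset.range (d + 1), f.coeff i * w (k - (i : ℤ)) = 0)
    (e : WithTop ℤ) (he : e = (Finset.range d).inf fun i => v (w (i : ℤ))) :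
    (∃ N : ℤ, ∀ i : ℤ, N ≤ i → e ≤ v (w i)) ∧ (∀ N : ℤ, ∃ i : ℤ, N ≤ i ∧ v (w i) = e) := by
  clear hd
  -- v 1 = 0
  have hv1 : v 1 = 0 := by
    have h := hvmul 1 1
    rw [one_mul] at h
    by_cases ht : v 1 = ⊤
    · exfalso
      have := hvmul (f.coeff 0) 1
      rw [mul_one, ht, add_top, hf0] at this
      exact (WithTop.zero_ne_top) this
    · obtain ⟨x, hx⟩ := WithTop.ne_top_iff_exists.mp ht
      rw [← hx] at h ⊢
      norm_cast at h ⊢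
      omega
  have hvneg1 : v (-1) = 0 := by
    have h := hvmul (-1) (-1)
    rw [neg_one_mul, neg_neg, hv1] at h
    by_cases ht : v (-1) = ⊤
    · rw [ht, add_top] at h; exact (WithTop.zero_ne_top h).elim
    · obtain ⟨x, hx⟩ := WithTop.ne_top_iff_exists.mp ht
      rw [← hx] at h ⊢
      norm_cast at h ⊢
      omega
  have hvneg : ∀ a : K, v (-a) = v a := by
    intro a
    have := hvmul (-1) a
    rw [neg_one_mul] at this
    rw [this, hvneg1, zero_add]
  have hveq : ∀ a b : K, a + b = 0 → v a = v b := by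
    intro a b h
    have hab : a = -b := by linear_combination h
    rw [hab, hvneg]
  -- inf bound on sums
  have hvsum : ∀ (s : Finset ℕ) (g : ℕ → K),
      (s.inf fun i => v (g i)) ≤ v (∑ i ∈ s, g i) := by
    intro s g
    induction s using Finset.cons_induction with
    | empty => simp [hv0]
    | cons a s ha ih =>
      rw [Finset.sum_cons, Finset.inf_cons]
      exact le_trans (min_le_min le_rfl ih) (hvadd _ _)
  rcases Nat.eq_zero_or_pos d with hd0 | hdpos
  · exfalso
    apply hw
    funext k
    have hc := hconv k
    subst hd0
    simp at hc
    rcases hc with hc | hc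
    · exact absurd hc h0
    · exact hc
  -- main case
  set m : ℤ → WithTop ℤ := fun k => (Finset.range d).inf fun i => v (w (k + (i : ℤ))) with hm
  have he0 : e = m 0 := by
    rw [he, hm]
    simp
  -- forward recursion
  have hF : ∀ k : ℤ, m k ≤ v (w (k + d)) := by
    intro k
    have hc := hconv (k + d)
    rw [Finset.sum_range_succ'] at hc
    have h1 : v (∑ i ∈ Finset.range d, f.coeff (i + 1) * w (k + d - ((i : ℕ) + 1 : ℕ))) =
        v (f.coeff 0 * w (k + d - ((0 : ℕ) : ℤ))) := hveq _ _ hc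
    have h2 : v (f.coeff 0 * w (k + d - ((0 : ℕ) : ℤ))) = v (w (k + d)) := by
      rw [hvmul, hf0, zero_add]
      norm_num
    rw [h2] at h1
    rw [← h1]
    refine le_trans ?_ (hvsum _ _)
    apply Finset.le_inf
    intro i hi
    rw [Finset.mem_range] at hi
    rw [hvmul]
    refine le_trans ?_ (le_add_of_nonneg_left (hint (i + 1)))
    have hj : k + (d : ℤ) - (((i : ℕ) + 1 : ℕ) : ℤ) = k + ((d - 1 - i : ℕ) : ℤ) := by
      push_cast [Nat.cast_sub]
      omega
    rw [hj]
    exact Finset.inf_le (Finset.mem_range.mpr (by omega))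
  -- backward recursion
  have hB : ∀ k : ℤ, m k ≤ v (w (k - 1)) := by
    intro k
    have hc := hconv (k - 1 + d)
    rw [Finset.sum_range_succ] at hc
    have h1 : v (∑ i ∈ Finset.range d, f.coeff i * w (k - 1 + d - (i : ℤ))) =
        v (f.coeff d * w (k - 1 + d - (d : ℤ))) := hveq _ _ hc
    have h2 : v (f.coeff d * w (k - 1 + d - (d : ℤ))) = v (w (k - 1)) := by
      rw [hvmul, hfd, zero_add]
      norm_num
    rw [h2] at h1
    rw [← h1]
    refine le_trans ?_ (hvsum _ _)
    apply Finset.le_inf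
    intro i hi
    rw [Finset.mem_range] at hi
    rw [hvmul]
    refine le_trans ?_ (le_add_of_nonneg_left (hint i))
    have hj : k - 1 + (d : ℤ) - (i : ℤ) = k + ((d - 1 - i : ℕ) : ℤ) := by
      push_cast [Nat.cast_sub]
      omega
    rw [hj]
    exact Finset.inf_le (Finset.mem_range.mpr (by omega))
  -- monotonicity both ways
  have hup : ∀ k : ℤ, m k ≤ m (k + 1) := by
    intro k
    apply Finset.le_inf
    intro i hi
    rw [Finset.mem_range] at hi
    rcases eq_or_lt_of_le (Nat.lt_succ_iff.mp (by omega : i < (d - 1) + 1)) with hie | hie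
    · have : k + 1 + (i : ℤ) = k + d := by
        subst hie
        push_cast [Nat.cast_sub hdpos]
        ring
      rw [this]
      exact hF k
    · have : k + 1 + (i : ℤ) = k + ((i + 1 : ℕ) : ℤ) := by push_cast; ring
      rw [this]
      exact Finset.inf_le (Finset.mem_range.mpr (by omega))
  have hdown : ∀ k : ℤ, m k ≤ m (k - 1) := by
    intro k
    apply Finset.le_inf
    intro i hi
    rw [Finset.mem_range] at hi
    rcases Nat.eq_zero_or_pos i with hie | hie
    · subst hie
      have : k - 1 + ((0 : ℕ) : ℤ) = k - 1 := by norm_num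
      rw [this]
      exact hB k
    · have : k - 1 + (i : ℤ) = k + ((i - 1 : ℕ) : ℤ) := by
        push_cast [Nat.cast_sub hie]
        ring
      rw [this]
      exact Finset.inf_le (Finset.mem_range.mpr (by omega))
  have hstep : ∀ k : ℤ, m (k + 1) = m k := by
    intro k
    refine le_antisymm ?_ (hup k)
    have := hdown (k + 1)
    simpa using this
  have hconst : ∀ k : ℤ, m k = e := by
    intro k
    rw [he0]
    induction k using Int.induction_on with
    | zero => rfl
    | succ n ih => rw [hstep n, ih]
    | pred n ih =>
      rw [← ih]
      have h1 := hstep (-(n : ℤ) - 1)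
      have h2 : (-(n : ℤ) - 1) + 1 = -(n : ℤ) := by ring
      rw [h2] at h1
      exact h1.symm
  constructor
  · refine ⟨0, fun i _ => ?_⟩
    rw [← hconst i]
    have : v (w i) = v (w (i + ((0 : ℕ) : ℤ))) := by norm_num
    rw [this]
    exact Finset.inf_le (Finset.mem_range.mpr hdpos)
  · intro N
    obtain ⟨j, hj, hje⟩ := Finset.exists_mem_eq_inf (Finset.range d)
      (Finset.nonempty_range_iff.mpr (by omega)) (fun i => v (w (N + (i : ℤ))))
    refine ⟨N + j, by omega, ?_⟩
    rw [← hje]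
    exact hconst N
end

section
/- Let K be a field equipped with a discrete additive valuation v : K → ℤ ∪ {∞} (so v(0) = ∞, v(ab) = v(a) + v(b), and v(a+b) ≥ min(v(a), v(b))). Let f = f_1 · f_2 ⋯ f_r ∈ K[T] be a product of polynomials, where each f_j is nonzero with nonzero constant coefficient, splits into linear factors over K, and all roots of f_j have the same valuation c_j ∈ ℤ, with c_1, …, c_r pairwise distinct. Then every f-torsion element w ∈ W_f can be written as w = w_1 + ⋯ + w_r with w_j ∈ W_{f_j} for each j, and this decomposition is unique; that is, W_f is the internal direct sum of the subspaces W_{f_1}, …, W_{f_r}. -/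
open Polynomial


/-- The property of a doubly infinite sequence `w : ℤ → K` being killed by the
convolution action of a polynomial `f ∈ K[T]`:
`(f·w)_k = Σ_i f_i w_{k-i} = 0` for all `k ∈ ℤ`. -/
def PolyTorsion {K : Type*} [Field K] (f : Polynomial K) (w : ℤ → K) : Prop :=
  ∀ k : ℤ, ∑ i ∈ Finset.range (f.natDegree + 1), f.coeff i * w (k - (i : ℤ)) = 0

noncomputable section AuxShift

variable {K : Type*} [Field K]

/-- The shift endomorphism on doubly infinite sequences. -/
def Sh (K : Type*) [Field K] : Module.End K (ℤ → K) where
  toFun w k := w (k - 1)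
  map_add' _ _ := rfl
  map_smul' _ _ := rfl

lemma Sh_pow_apply (i : ℕ) (w : ℤ → K) (k : ℤ) : ((Sh K) ^ i) w k = w (k - i) := by
  induction i generalizing w k with
  | zero => simp
  | succ n ih =>
    rw [pow_succ]
    show ((Sh K) ^ n) ((Sh K) w) k = _
    rw [ih]
    show w (k - n - 1) = w (k - (n + 1 : ℕ))
    congr 1; push_cast; ring

lemma aeval_Sh_apply (f : K[X]) (w : ℤ → K) (k : ℤ) :
    (aeval (Sh K) f) w k = ∑ i ∈ Finset.range (f.natDegree + 1), f.coeff i * w (k - (i : ℤ)) := by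
  rw [Polynomial.aeval_eq_sum_range]
  simp [LinearMap.sum_apply, Sh_pow_apply]

lemma polyTorsion_iff (f : K[X]) (w : ℤ → K) :
    PolyTorsion f w ↔ (aeval (Sh K) f) w = 0 := by
  constructor
  · intro h; funext k; rw [aeval_Sh_apply]; exact h k
  · intro h k; rw [← aeval_Sh_apply, h]; rfl

lemma mul_tors (p f : K[X]) (w : ℤ → K) (h : (aeval (Sh K) f) w = 0) :
    (aeval (Sh K) (p * f)) w = 0 := by
  rw [map_mul, Module.End.mul_apply, h, map_zero]

end AuxShift

/-- Let `K` be a field with a discrete additive valuation `v`, and let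
`f = f_1 ⋯ f_r ∈ K[T]` be a product of polynomials, each nonzero with nonzero
constant coefficient, each splitting into linear factors over `K`, with all roots of
`f_j` of the same valuation `c_j`, the `c_j` pairwise distinct.  Then every
`f`-torsion doubly infinite sequence `w` decomposes uniquely as `w = w_1 + ⋯ + w_r`
with `w_j` an `f_j`-torsion sequence: `W_f` is the internal direct sum of the
`W_{f_j}`. -/
theorem stmt16 {K : Type*} [Field K] (v : K → WithTop ℤ)
    (hv0 : v 0 = ⊤)
    (hvmul : ∀ a b : K, v (a * b) = v a + v b)
    (hvadd : ∀ a b : K, min (v a) (v b) ≤ v (a + b))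
    (r : ℕ) (F : Fin r → Polynomial K) (c : Fin r → ℤ)
    (hne : ∀ j, F j ≠ 0)
    (h0 : ∀ j, (F j).coeff 0 ≠ 0)
    (hsplit : ∀ j, Polynomial.Splits ((F j).map (RingHom.id K)))
    (hroots : ∀ j, ∀ x ∈ (F j).roots, v x = (c j : WithTop ℤ))
    (hcinj : Function.Injective c)
    (w : ℤ → K) (hw : PolyTorsion (∏ j, F j) w) :
    ∃! g : Fin r → ℤ → K, (∀ j, PolyTorsion (F j) (g j)) ∧ w = ∑ j, g j := by
  classical
  -- Step 1: the `F j` are pairwise coprime.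
  have hcop : ∀ i j : Fin r, i ≠ j → IsCoprime (F i) (F j) := by
    intro i j hij
    by_contra hcp
    rw [← EuclideanDomain.gcd_isUnit_iff] at hcp
    set d := EuclideanDomain.gcd (F i) (F j) with hd
    have hdi : d ∣ F i := EuclideanDomain.gcd_dvd_left _ _
    have hdj : d ∣ F j := EuclideanDomain.gcd_dvd_right _ _
    have hdsplits : Polynomial.Splits d :=
      Polynomial.Splits.of_dvd (by simpa using hsplit i) (hne i) hdi
    have hdeg : d.degree ≠ 0 := fun hdeg =>
      hcp (Polynomial.isUnit_iff_degree_eq_zero.2 hdeg)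
    obtain ⟨x, hx⟩ := hdsplits.exists_eval_eq_zero hdeg
    have hxd : d.IsRoot x := by
      exact hx
    have hxi : x ∈ (F i).roots :=
      (Polynomial.mem_roots (hne i)).2 (hxd.dvd hdi)
    have hxj : x ∈ (F j).roots :=
      (Polynomial.mem_roots (hne j)).2 (hxd.dvd hdj)
    have : (c i : WithTop ℤ) = (c j : WithTop ℤ) :=
      (hroots i x hxi).symm.trans (hroots j x hxj)
    exact hij (hcinj (WithTop.coe_injective this))
  -- Step 2: existence of decompositions, by induction on a finset of indices.
  have key : ∀ s : Finset (Fin r), ∀ u : ℤ → K,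
      (aeval (Sh K) (∏ j ∈ s, F j)) u = 0 →
      ∃ g : Fin r → ℤ → K, (∀ j, (aeval (Sh K) (F j)) (g j) = 0) ∧
        (∀ j ∉ s, g j = 0) ∧ u = ∑ j ∈ s, g j := by
    intro s
    induction s using Finset.induction_on with
    | empty =>
      intro u hu
      refine ⟨0, fun j => map_zero _, fun j _ => rfl, ?_⟩
      rw [Finset.prod_empty, map_one] at hu
      rw [Finset.sum_empty, ← hu]; rfl
    | @insert a s ha ih =>
      intro u hu
      rw [Finset.prod_insert ha] at hu
      have hcopa : IsCoprime (F a) (∏ j ∈ s, F j) :=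
        IsCoprime.prod_right fun i hi => hcop a i (by rintro rfl; exact ha hi)
      obtain ⟨p, q, hpq⟩ := hcopa
      set wa := (aeval (Sh K) (q * ∏ j ∈ s, F j)) u with hwa
      set w' := (aeval (Sh K) (p * F a)) u with hw'
      have hsum : wa + w' = u := by
        rw [hwa, hw', ← LinearMap.add_apply, ← map_add]
        have : q * ∏ j ∈ s, F j + p * F a = 1 := by rw [add_comm]; exact hpq
        rw [this, map_one]; rfl
      have htorsa : (aeval (Sh K) (F a)) wa = 0 := by
        have he : F a * (q * ∏ j ∈ s, F j) = q * (F a * ∏ j ∈ s, F j) := by ring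
        rw [hwa, ← Module.End.mul_apply, ← map_mul, he]
        exact mul_tors q _ u hu
      have htors' : (aeval (Sh K) (∏ j ∈ s, F j)) w' = 0 := by
        have he : (∏ j ∈ s, F j) * (p * F a) = p * (F a * ∏ j ∈ s, F j) := by ring
        rw [hw', ← Module.End.mul_apply, ← map_mul, he]
        exact mul_tors p _ u hu
      obtain ⟨g, hg1, hg2, hg3⟩ := ih w' htors'
      refine ⟨Function.update g a wa, ?_, ?_, ?_⟩
      · intro j
        rcases eq_or_ne j a with rfl | hja
        · rw [Function.update_self]; exact htorsa
        · rw [Function.update_of_ne hja]; exact hg1 j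
      · intro j hj
        rw [Finset.mem_insert, not_or] at hj
        rw [Function.update_of_ne hj.1]; exact hg2 j hj.2
      · rw [Finset.sum_insert ha, Function.update_self]
        have hrest : ∑ j ∈ s, Function.update g a wa j = ∑ j ∈ s, g j :=
          Finset.sum_congr rfl fun j hj =>
            Function.update_of_ne (by rintro rfl; exact ha hj) _ _
        rw [hrest, ← hg3]; exact hsum.symm
  rw [polyTorsion_iff] at hw
  obtain ⟨g, hg1, -, hg3⟩ := key Finset.univ w hw
  refine ⟨g, ⟨fun j => (polyTorsion_iff _ _).2 (hg1 j), hg3⟩, ?_⟩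
  -- Step 3: uniqueness.
  rintro g' ⟨hg'1, hg'3⟩
  funext j₀
  set Q := ∏ j ∈ Finset.univ.erase j₀, F j with hQ
  set d := g' j₀ - g j₀ with hdd
  have hFd : (aeval (Sh K) (F j₀)) d = 0 := by
    rw [hdd, map_sub, hg1 j₀, (polyTorsion_iff _ _).1 (hg'1 j₀), sub_zero]
  have hQd : (aeval (Sh K) Q) d = 0 := by
    have h1 : ∑ j ∈ Finset.univ.erase j₀, g j + g j₀ = ∑ j, g j :=
      Finset.sum_erase_add _ _ (Finset.mem_univ j₀)
    have h2 : ∑ j ∈ Finset.univ.erase j₀, g' j + g' j₀ = ∑ j, g' j :=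
      Finset.sum_erase_add _ _ (Finset.mem_univ j₀)
    have h3 : (∑ j, g j) = ∑ j, g' j := hg3.symm.trans hg'3
    have hd : d = ∑ j ∈ Finset.univ.erase j₀, (g j - g' j) := by
      rw [Finset.sum_sub_distrib, hdd]
      linear_combination (h2 - h1) - h3
    rw [hd, map_sum]
    refine Finset.sum_eq_zero fun j hj => ?_
    obtain ⟨m, hm⟩ := Finset.dvd_prod_of_mem F hj
    have hFj : (aeval (Sh K) (F j)) (g j - g' j) = 0 := by
      rw [map_sub, hg1 j, (polyTorsion_iff _ _).1 (hg'1 j), sub_zero]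
    rw [hQ, hm, mul_comm]
    exact mul_tors m (F j) _ hFj
  have hcopj : IsCoprime (F j₀) Q :=
    IsCoprime.prod_right fun i hi => hcop j₀ i (Finset.mem_erase.1 hi).1.symm
  obtain ⟨a, b, hab⟩ := hcopj
  have hd0 : d = 0 := by
    have h1 := mul_tors a (F j₀) d hFd
    have h2 := mul_tors b Q d hQd
    have h0 : (aeval (Sh K) (a * F j₀ + b * Q)) d = d := by
      rw [hab, map_one, Module.End.one_apply]
    rw [map_add, LinearMap.add_apply, h1, h2, add_zero] at h0
    exact h0.symm
  exact sub_eq_zero.1 hd0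
end
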